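/- Let V : ℝ → ℝ be a convex function. Then for all x, y, u, w ∈ ℝ, V(x - u) + V(y - w) ≥ V(min(x,y) - min(u,w)) + V(max(x,y) - max(u,w)). -/

import Mathlib

lemma convex_key (V : ℝ → ℝ) (hV : ConvexOn ℝ Set.univ V) {a b c d : ℝ}
    (hac : a ≤ c) (hcb : c ≤ b) (hsum : c + d = a + b) :
    V c + V d ≤ V a + V b := by
  rcases eq_or_lt_of_le (hac.trans hcb) with h | h
  · have hca : c = a := le_antisymm (h ▸ hcb) hac
    have hdb : d = b := by linarith
    rw [hca, hdb]
  · set t : ℝ := (b - c) / (b - a) with ht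
    have hba : (0:ℝ) < b - a := by linarith
    have ht0 : 0 ≤ t := div_nonneg (by linarith) hba.le
    have ht1 : t ≤ 1 := by
      rw [div_le_one hba]; linarith
    have htc : t * a + (1 - t) * b = c := by
      have e : t * (b - a) = b - c := by rw [ht]; exact div_mul_cancel₀ _ hba.ne'
      linear_combination -e
    have htd : (1 - t) * a + t * b = d := by
      have : t * (b - a) = b - c := by rw [ht]; exact div_mul_cancel₀ _ hba.ne'
      nlinarith
    have h1 := hV.2 (Set.mem_univ a) (Set.mem_univ b) ht0 (show (0:ℝ) ≤ 1 - t by linarith) (by ring)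
    have h2 := hV.2 (Set.mem_univ a) (Set.mem_univ b) (by linarith : (0:ℝ) ≤ 1 - t) ht0 (by ring)
    simp only [smul_eq_mul] at h1 h2
    rw [htc] at h1
    rw [htd] at h2
    linarith

theorem convex_submodular_shift (V : ℝ → ℝ) (hV : ConvexOn ℝ Set.univ V)
    (x y u w : ℝ) :
    V (min x y - min u w) + V (max x y - max u w) ≤ V (x - u) + V (y - w) := by
  rcases le_total x y with hxy | hxy <;> rcases le_total u w with huw | huw
  · rw [min_eq_left hxy, max_eq_right hxy, min_eq_left huw, max_eq_right huw]
  · rw [min_eq_left hxy, max_eq_right hxy, min_eq_right huw, max_eq_left huw]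
    exact convex_key V hV (by linarith) (by linarith) (by ring)
  · rw [min_eq_right hxy, max_eq_left hxy, min_eq_left huw, max_eq_right huw]
    rw [add_comm (V (x-u))]
    exact convex_key V hV (by linarith) (by linarith) (by ring)
  · rw [min_eq_right hxy, max_eq_left hxy, min_eq_right huw, max_eq_left huw, add_comm]
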